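/- Let G be a finite group, let K be a Carter subgroup of G with centre Z(K), and let z ∈ Z(K) with z ≠ 1. Assume that any two Carter subgroups of the centralizer C_G(z) are conjugate in C_G(z). Then no G-conjugate of z other than z itself lies in Z(K): for every g ∈ G, if g⁻¹zg ∈ Z(K) then g⁻¹zg = z. -/

import Mathlib

open Subgroup

/-- A Carter subgroup of a group `G` is a nilpotent self-normalizing subgroup. -/
def IsCarterSubgroup {G : Type*} [Group G] (K : Subgroup G) : Prop :=
  Group.IsNilpotent K ∧ Subgroup.normalizer (K : Set G) = K

lemma carter_subgroupOf {G : Type*} [Group G] {K H : Subgroup G}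
    (hK : IsCarterSubgroup K) (hKH : K ≤ H) : IsCarterSubgroup (K.subgroupOf H) := by
  constructor
  · have := hK.1
    exact nilpotent_of_mulEquiv (Subgroup.subgroupOfEquivOfLe hKH).symm
  · refine le_antisymm ?_ le_normalizer
    intro x hx
    rw [mem_subgroupOf]
    rw [← hK.2, Subgroup.mem_normalizer_iff]
    rw [Subgroup.mem_normalizer_iff] at hx
    intro k
    constructor
    · intro hk
      have := (hx ⟨k, hKH hk⟩).mp (by simpa [mem_subgroupOf] using hk)
      simpa [mem_subgroupOf] using this
    · intro hk
      have hkH : k ∈ H := by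
        have h1 : ((x : G) * k * (x : G)⁻¹) ∈ H := hKH hk
        have := H.mul_mem (H.mul_mem (H.inv_mem x.2) h1) x.2
        simpa [mul_assoc] using this
      have := (hx ⟨k, hkH⟩).mpr (by simpa [mem_subgroupOf] using hk)
      simpa [mem_subgroupOf] using this

lemma carter_map_conj {G : Type*} [Group G] {K : Subgroup G} (g : G)
    (hK : IsCarterSubgroup K) :
    IsCarterSubgroup (K.map (MulAut.conj g).toMonoidHom) := by
  constructor
  · have := hK.1
    exact nilpotent_of_mulEquiv
      ((MulEquiv.subgroupCongr rfl).trans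
        (Subgroup.equivMapOfInjective K _ (MulAut.conj g).injective))
  · rw [← Subgroup.map_equiv_normalizer_eq K (MulAut.conj g), hK.2]

/-- No conjugate of a nontrivial central element `z` of a Carter subgroup `K`,
other than `z` itself, lies in `Z(K)`, provided Carter subgroups of `C_G(z)`
are conjugate. -/
theorem no_other_conjugate_in_center {G : Type*} [Group G] [Finite G]
    (K : Subgroup G) (hK : IsCarterSubgroup K)
    (z : G) (hz : z ≠ 1) (hzK : z ∈ K) (hzc : ∀ k ∈ K, z * k = k * z)
    (hconj : ∀ K₁ K₂ : Subgroup ↥(Subgroup.centralizer {z}),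
      IsCarterSubgroup K₁ → IsCarterSubgroup K₂ →
      ∃ g : ↥(Subgroup.centralizer {z}), K₁.map (MulAut.conj g).toMonoidHom = K₂)
    (g : G) (hgK : g⁻¹ * z * g ∈ K)
    (hgc : ∀ k ∈ K, (g⁻¹ * z * g) * k = k * (g⁻¹ * z * g)) :
    g⁻¹ * z * g = z := by
  set H := Subgroup.centralizer ({z} : Set G) with hH
  have hKH : K ≤ H := by
    intro k hk
    rw [Subgroup.mem_centralizer_singleton_iff]
    exact (hzc k hk).symm
  set K' := K.map (MulAut.conj g).toMonoidHom with hK'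
  have hK'H : K' ≤ H := by
    rintro _ ⟨k, hk, rfl⟩
    rw [Subgroup.mem_centralizer_singleton_iff]
    have h1 := hgc k hk
    -- z * (g k g⁻¹) = (g k g⁻¹) * z
    have : (MulAut.conj g).toMonoidHom k * z = z * ((MulAut.conj g).toMonoidHom k) := by
      simp only [MulEquiv.toMonoidHom_eq_coe, MonoidHom.coe_coe, MulAut.conj_apply]
      calc g * k * g⁻¹ * z = g * (k * (g⁻¹ * z * g)) * g⁻¹ := by group
        _ = g * ((g⁻¹ * z * g) * k) * g⁻¹ := by rw [h1]
        _ = z * (g * k * g⁻¹) := by group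
    exact this
  obtain ⟨c, hc⟩ := hconj (K.subgroupOf H) (K'.subgroupOf H)
    (carter_subgroupOf hK hKH) (carter_subgroupOf (carter_map_conj g hK) hK'H)
  -- push hc down to G
  have hcomm : H.subtype.comp (MulAut.conj c).toMonoidHom
      = ((MulAut.conj (c : G)).toMonoidHom).comp H.subtype := by
    ext x; rfl
  have hmap : K.map (MulAut.conj (c : G)).toMonoidHom = K' := by
    have h1 : (K.subgroupOf H).map H.subtype = K := by
      rw [Subgroup.subgroupOf_map_subtype, inf_eq_left.mpr hKH]
    have h2 : (K'.subgroupOf H).map H.subtype = K' := by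
      rw [Subgroup.subgroupOf_map_subtype, inf_eq_left.mpr hK'H]
    calc K.map (MulAut.conj (c : G)).toMonoidHom
        = ((K.subgroupOf H).map H.subtype).map (MulAut.conj (c : G)).toMonoidHom := by rw [h1]
      _ = (K.subgroupOf H).map (((MulAut.conj (c : G)).toMonoidHom).comp H.subtype) := by
          rw [Subgroup.map_map]
      _ = (K.subgroupOf H).map (H.subtype.comp (MulAut.conj c).toMonoidHom) := by rw [hcomm]
      _ = ((K.subgroupOf H).map (MulAut.conj c).toMonoidHom).map H.subtype := by
          rw [Subgroup.map_map]
      _ = K' := by rw [hc, h2]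
  -- K.map (conj ((c:G)⁻¹ * g)) = K
  have hconjmul : ∀ a b : G, (Subgroup.map (MulAut.conj a).toMonoidHom
      (Subgroup.map (MulAut.conj b).toMonoidHom K)) =
      Subgroup.map (MulAut.conj (a * b)).toMonoidHom K := by
    intro a b
    rw [Subgroup.map_map]
    congr 1
    ext x
    simp [mul_assoc]
  have hone : K.map (MulAut.conj (1 : G)).toMonoidHom = K := by
    ext x; simp [Subgroup.mem_map, MulAut.conj_apply]
  have hfix : K.map (MulAut.conj ((c : G)⁻¹ * g)).toMonoidHom = K := by
    have h1 := congrArg (Subgroup.map (MulAut.conj ((c : G)⁻¹)).toMonoidHom) hmap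
    rw [hconjmul, inv_mul_cancel, hone, hK', hconjmul] at h1
    exact h1.symm
  set h : G := (c : G)⁻¹ * g with hh
  have hhK : h ∈ K := by
    rw [← hK.2, Subgroup.mem_normalizer_iff]
    intro k
    constructor
    · intro hk
      rw [← hfix]
      exact ⟨k, hk, rfl⟩
    · intro hk
      rw [← hfix] at hk
      obtain ⟨y, hy, hyk⟩ := hk
      simp only [MulEquiv.toMonoidHom_eq_coe, MonoidHom.coe_coe, MulAut.conj_apply] at hyk
      have : y = k := by
        have := mul_left_cancel (mul_right_cancel hyk)
        exact this
      rwa [← this]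
  have hcz : z * (c : G) = (c : G) * z := (Subgroup.mem_centralizer_singleton_iff.mp c.2).symm
  have hhz : z * h = h * z := hzc h hhK
  have hg : g = (c : G) * h := by rw [hh]; group
  rw [hg]
  have : h⁻¹ * ((c : G)⁻¹ * z * (c : G)) * h = z := by
    have e1 : (c : G)⁻¹ * z * (c : G) = z := by
      have h2 : (c : G)⁻¹ * (z * (c : G)) = z := by rw [hcz]; group
      simpa [mul_assoc] using h2
    rw [e1]
    have : h⁻¹ * (z * h) = z := by rw [hhz]; group
    simpa [mul_assoc] using this
  calc ((c:G) * h)⁻¹ * z * ((c:G) * h) = h⁻¹ * ((c : G)⁻¹ * z * (c : G)) * h := by group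
    _ = z := this
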